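/- A measurable function L : [A,∞) → (0,∞) is slowly varying at infinity if and only if there exist b ≥ A, a measurable function M on [b,∞) with lim_{u→∞} M(u) = M* for some constant M* ∈ (0,∞), and a continuous function φ on [b,∞) with lim_{u→∞} φ(u) = 0, such that L(u) = M(u)·exp(∫_b^u φ(t)/t dt) for all u ≥ b. -/

import Mathlib

open Filter MeasureTheory Set Topology

noncomputable section

set_option maxHeartbeats 1000000 in
private theorem uct_aux
 (h : ℝ → ℝ) (hm : Measurable h)
    (hs : ∀ l : ℝ, Tendsto (fun x => h (x + l) - h x) atTop (𝓝 0)) :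
    ∀ ε : ℝ, 0 < ε → ∃ X : ℝ, ∀ x, X ≤ x → ∀ l ∈ Icc (0:ℝ) 1, |h (x + l) - h x| ≤ ε := by
  by_contra hcon
  push_neg at hcon
  obtain ⟨ε, hε, hbad⟩ := hcon
  -- extract sequences
  choose x hx l hl hfar using fun n : ℕ => hbad n
  have hxtop : Tendsto x atTop atTop :=
    tendsto_atTop_mono hx tendsto_natCast_atTop_atTop
  -- two sequences of functions
  set f : ℕ → ℝ → ℝ := fun n t => h (x n + t) - h (x n) with hf
  set f' : ℕ → ℝ → ℝ := fun n t => h (x n + l n + t) - h (x n + l n) with hf'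
  have hxltop : Tendsto (fun n => x n + l n) atTop atTop :=
    tendsto_atTop_mono (fun n => le_add_of_nonneg_right (hl n).1) hxtop
  have hfm : ∀ n, StronglyMeasurable (f n) := fun n =>
    ((hm.comp (measurable_const_add (x n))).sub measurable_const).stronglyMeasurable
  have hfm' : ∀ n, StronglyMeasurable (f' n) := fun n =>
    ((hm.comp (measurable_const_add (x n + l n))).sub measurable_const).stronglyMeasurable
  have hpt : ∀ t : ℝ, Tendsto (fun n => f n t) atTop (𝓝 0) := by
    intro t
    have := (hs t).comp hxtop
    simpa [f, Function.comp_def] using this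
  have hpt' : ∀ t : ℝ, Tendsto (fun n => f' n t) atTop (𝓝 0) := by
    intro t
    have := (hs t).comp hxltop
    simpa [f', Function.comp_def] using this
  have hsmeas : MeasurableSet (Icc (0:ℝ) 2) := measurableSet_Icc
  have hsfin : volume (Icc (0:ℝ) 2) ≠ ⊤ := by
    rw [Real.volume_Icc]; exact ENNReal.ofReal_ne_top
  obtain ⟨t₁, ht₁s, ht₁m, ht₁v, hu₁⟩ :=
    tendstoUniformlyOn_of_ae_tendsto (μ := volume) hfm
      stronglyMeasurable_const hsmeas hsfin
      (Eventually.of_forall fun t _ => hpt t) (show (0:ℝ) < 1/4 by norm_num)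
  obtain ⟨t₂, ht₂s, ht₂m, ht₂v, hu₂⟩ :=
    tendstoUniformlyOn_of_ae_tendsto (μ := volume) hfm'
      stronglyMeasurable_const hsmeas hsfin
      (Eventually.of_forall fun t _ => hpt' t) (show (0:ℝ) < 1/4 by norm_num)
  set S := Icc (0:ℝ) 2 \ t₁ with hS
  set S' := Icc (0:ℝ) 2 \ t₂ with hS'
  -- for each n, there is τ ∈ [0,1] with τ ∈ S' and l n + τ ∈ S
  have hτ : ∀ n : ℕ, ∃ τ ∈ Icc (0:ℝ) 1, τ ∈ S' ∧ l n + τ ∈ S := by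
    intro n
    by_contra hno
    push_neg at hno
    have hsub : Icc (0:ℝ) 1 ⊆ t₂ ∪ (fun τ => l n + τ) ⁻¹' t₁ := by
      intro τ hτ1
      have h2 : τ ∈ Icc (0:ℝ) 2 := ⟨hτ1.1, le_trans hτ1.2 one_le_two⟩
      have h3 : l n + τ ∈ Icc (0:ℝ) 2 :=
        ⟨add_nonneg (hl n).1 hτ1.1, by linarith [(hl n).2, hτ1.2]⟩
      by_cases hm1 : τ ∈ t₂
      · exact mem_union_left _ hm1
      · by_cases hm2 : l n + τ ∈ t₁
        · exact mem_union_right _ hm2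
        · exact absurd ⟨h3, hm2⟩ (hno τ hτ1 ⟨h2, hm1⟩)
    have hv : volume (Icc (0:ℝ) 1) ≤ volume (t₂ ∪ (fun τ => l n + τ) ⁻¹' t₁) :=
      measure_mono hsub
    have hvt : volume ((fun τ => l n + τ) ⁻¹' t₁) = volume t₁ := by
      simp [measure_preimage_add]
    have : (volume (Icc (0:ℝ) 1)) ≤ volume t₂ + volume t₁ := by
      calc volume (Icc (0:ℝ) 1) ≤ volume (t₂ ∪ (fun τ => l n + τ) ⁻¹' t₁) := hv
        _ ≤ volume t₂ + volume ((fun τ => l n + τ) ⁻¹' t₁) := measure_union_le _ _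
        _ = volume t₂ + volume t₁ := by rw [hvt]
    rw [Real.volume_Icc] at this
    have h14 : volume t₂ + volume t₁ ≤ ENNReal.ofReal (1/4) + ENNReal.ofReal (1/4) :=
      add_le_add ht₂v ht₁v
    have := le_trans this h14
    rw [← ENNReal.ofReal_add (by norm_num) (by norm_num)] at this
    rw [ENNReal.ofReal_le_ofReal_iff (by norm_num)] at this
    norm_num at this
  choose τ hτ1 hτS' hτS using hτ
  -- uniform smallness
  rw [Metric.tendstoUniformlyOn_iff] at hu₁ hu₂
  have h1 := hu₁ (ε/2) (by linarith)
  have h2 := hu₂ (ε/2) (by linarith)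
  obtain ⟨N, hN⟩ := ((h1.and h2).and (eventually_ge_atTop 0)).exists
  obtain ⟨⟨hN1, hN2⟩, _⟩ := hN
  have e1 : |f N (l N + τ N)| < ε/2 := by
    have := hN1 (l N + τ N) (hτS N)
    rwa [dist_comm, Real.dist_eq, sub_zero] at this
  have e2 : |f' N (τ N)| < ε/2 := by
    have := hN2 (τ N) (hτS' N)
    rwa [dist_comm, Real.dist_eq, sub_zero] at this
  have key : h (x N + l N) - h (x N) = f N (l N + τ N) - f' N (τ N) := by
    simp only [f, f']
    ring_nf
  have hbig := hfar N
  rw [key] at hbig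
  have hsmall : |f N (l N + τ N) - f' N (τ N)| < ε/2 + ε/2 :=
    lt_of_le_of_lt (abs_sub _ _) (add_lt_add e1 e2)
  linarith

set_option maxHeartbeats 1000000 in
private 
theorem rev_aux (A : ℝ) (hA : 0 < A) (L : ℝ → ℝ)
    (hLpos : ∀ u, A ≤ u → 0 < L u)
    (b : ℝ) (hb : A ≤ b) (M : ℝ → ℝ) (Mstar : ℝ) (hM0 : 0 < Mstar)
    (hM : Tendsto M atTop (𝓝 Mstar)) (φ : ℝ → ℝ) (hφc : ContinuousOn φ (Ici b))
    (hφ0 : Tendsto φ atTop (𝓝 0))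
    (hrep : ∀ u, b ≤ u → L u = M u * Real.exp (∫ t in b..u, φ t / t)) :
    ∀ ξ : ℝ, 0 < ξ → Tendsto (fun u => L (ξ * u) / L u) atTop (𝓝 (ξ ^ (0:ℝ))) := by
  have hb0 : 0 < b := lt_of_lt_of_le hA hb
  have hint : ∀ x, b ≤ x → IntervalIntegrable (fun t => φ t / t) volume b x := by
    intro x hx
    apply ContinuousOn.intervalIntegrable
    apply ContinuousOn.mono (s := Ici b)
    · exact hφc.div (continuousOn_id) (fun t ht => ne_of_gt (lt_of_lt_of_le hb0 ht))
    · rw [uIcc_of_le hx]; exact Icc_subset_Ici_self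
  intro ξ hξ
  rw [Real.rpow_zero]
  have hI : Tendsto (fun u => ∫ t in u..(ξ*u), φ t / t) atTop (𝓝 0) := by
    rw [Metric.tendsto_atTop]
    intro ε hε
    set m := min ξ 1 with hm
    have hd : (0:ℝ) < m := lt_min hξ one_pos
    set C := (ε/2) * (|ξ - 1| / m + 1)⁻¹ with hC
    have hCpos : 0 < C := by positivity
    obtain ⟨T, hT⟩ := (Metric.tendsto_atTop.mp hφ0) C hCpos
    refine ⟨max (max T b) (max (T/ξ) (b/ξ)), fun u hu => ?_⟩
    have huT : T ≤ u := le_trans (le_max_left T b) (le_trans (le_max_left _ _) hu)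
    have hub : b ≤ u := le_trans (le_max_right T b) (le_trans (le_max_left _ _) hu)
    have huTξ : T ≤ ξ * u := (div_le_iff₀' hξ).mp
      (le_trans (le_max_left _ _) (le_trans (le_max_right _ _) hu))
    have hubξ : b ≤ ξ * u := (div_le_iff₀' hξ).mp
      (le_trans (le_max_right _ _) (le_trans (le_max_right _ _) hu))
    have hu0 : 0 < u := lt_of_lt_of_le hb0 hub
    rw [dist_eq_norm, sub_zero]
    have key : ∀ t ∈ Set.uIoc u (ξ*u), ‖φ t / t‖ ≤ C / (m * u) := by
      intro t ht
      have hmin : m * u < t := by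
        rw [hm, min_mul_of_nonneg _ _ hu0.le, one_mul, min_comm]
        exact ht.1
      have htT : T ≤ t := le_of_lt (lt_of_le_of_lt (by
        rw [hm, min_mul_of_nonneg _ _ hu0.le, one_mul]
        exact le_min huTξ huT) hmin)
      have ht0 : 0 < t := lt_of_le_of_lt (by positivity) hmin
      have hφt : |φ t| ≤ C := by
        have := hT t htT
        rw [Real.dist_eq, sub_zero] at this
        exact this.le
      rw [norm_div, Real.norm_eq_abs, Real.norm_eq_abs, abs_of_pos ht0,
        div_le_div_iff₀ ht0 (by positivity)]
      exact mul_le_mul hφt hmin.le (by positivity) hCpos.le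
    calc ‖∫ t in u..(ξ*u), φ t / t‖ ≤ (C / (m * u)) * |ξ*u - u| :=
          intervalIntegral.norm_integral_le_of_norm_le_const key
      _ = C * (|ξ - 1| / m) := by
          have h1 : |ξ*u - u| = |ξ - 1| * u := by
            have h2 : ξ*u - u = (ξ-1)*u := by ring
            rw [h2, abs_mul, abs_of_pos hu0]
          rw [h1]; field_simp
      _ ≤ C * (|ξ - 1| / m + 1) := by nlinarith [hCpos.le]
      _ = ε/2 := by rw [hC, inv_mul_cancel_right₀ (by positivity)]
      _ < ε := by linarith
  have hMr : Tendsto (fun u => M (ξ*u) / M u) atTop (𝓝 1) := by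
    have h1 : Tendsto (fun u => M (ξ*u)) atTop (𝓝 Mstar) :=
      hM.comp (Tendsto.const_mul_atTop hξ tendsto_id)
    have := h1.div hM (ne_of_gt hM0)
    simpa [div_self (ne_of_gt hM0), Pi.div_def] using this
  have hexp : Tendsto (fun u => Real.exp (∫ t in u..(ξ*u), φ t / t)) atTop (𝓝 1) := by
    simpa [Function.comp_def] using (Real.continuous_exp.continuousAt (x := 0)).tendsto.comp hI
  have hprod := hMr.mul hexp
  rw [mul_one] at hprod
  apply hprod.congr'
  filter_upwards [eventually_ge_atTop (max b (b/ξ)),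
    hM.eventually (eventually_gt_nhds (show Mstar/2 < Mstar by linarith))] with u hu hMu
  have hub : b ≤ u := le_trans (le_max_left _ _) hu
  have hubξ : b ≤ ξ * u := (div_le_iff₀' hξ).mp (le_trans (le_max_right _ _) hu)
  have hMu0 : M u ≠ 0 := ne_of_gt (lt_trans (by linarith) hMu)
  rw [hrep u hub, hrep (ξ*u) hubξ,
    ← intervalIntegral.integral_interval_sub_left (hint _ hubξ) (hint _ hub),
    Real.exp_sub, div_mul_div_comm]

set_option maxHeartbeats 1000000 in
private theorem fwd_aux (A : ℝ) (hA : 0 < A) (L : ℝ → ℝ)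
    (hLmeas : Measurable L) (hLpos : ∀ u, A ≤ u → 0 < L u)
    (hrv : ∀ ξ : ℝ, 0 < ξ → Tendsto (fun u => L (ξ * u) / L u) atTop (𝓝 (ξ ^ (0:ℝ)))) :
    ∃ b : ℝ, A ≤ b ∧
      ∃ M : ℝ → ℝ, Measurable M ∧
        ∃ Mstar : ℝ, 0 < Mstar ∧ Tendsto M atTop (𝓝 Mstar) ∧
          ∃ φ : ℝ → ℝ, ContinuousOn φ (Ici b) ∧ Tendsto φ atTop (𝓝 0) ∧
            ∀ u, b ≤ u → L u = M u * Real.exp (∫ t in b..u, φ t / t) := by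
  classical
  set h : ℝ → ℝ := fun x => Real.log (L (Real.exp x)) with hh
  have hm : Measurable h :=
    Real.measurable_log.comp (hLmeas.comp Real.measurable_exp)
  -- additive slow variation
  have hs : ∀ l : ℝ, Tendsto (fun x => h (x + l) - h x) atTop (𝓝 0) := by
    intro l
    have h1 := hrv (Real.exp l) (Real.exp_pos l)
    rw [Real.rpow_zero] at h1
    have h2 : Tendsto (fun x : ℝ => L (Real.exp l * Real.exp x) / L (Real.exp x))
        atTop (𝓝 1) := h1.comp Real.tendsto_exp_atTop
    have h3 : Tendsto (fun x : ℝ =>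
        Real.log (L (Real.exp l * Real.exp x) / L (Real.exp x))) atTop (𝓝 0) := by
      have := (Real.continuousAt_log one_ne_zero).tendsto.comp h2
      simpa [Function.comp_def] using this
    apply h3.congr'
    filter_upwards [eventually_ge_atTop (max (Real.log A) (Real.log A - l))] with x hx
    have hx1 : A ≤ Real.exp x := by
      calc A = Real.exp (Real.log A) := (Real.exp_log hA).symm
        _ ≤ Real.exp x := Real.exp_le_exp.mpr (le_trans (le_max_left _ _) hx)
    have hx2 : A ≤ Real.exp (x + l) := by
      calc A = Real.exp (Real.log A) := (Real.exp_log hA).symm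
        _ ≤ Real.exp (x + l) := Real.exp_le_exp.mpr (by
            have := le_trans (le_max_right _ _) hx; linarith)
    rw [← Real.exp_add]
    rw [Real.log_div (ne_of_gt (hLpos _ (by rwa [add_comm] at hx2)))
      (ne_of_gt (hLpos _ hx1))]
    simp [hh, add_comm l x]
  -- UCT with ε = 1 and choice of X₀
  obtain ⟨X₁, hX₁⟩ := uct_aux h hm hs 1 one_pos
  set X₀ : ℝ := max X₁ (Real.log A + 1) with hX₀
  have hX₀A : Real.log A ≤ X₀ := le_trans (by linarith) (le_max_right _ _)
  have hX₀u : ∀ x, X₀ ≤ x → ∀ l ∈ Icc (0:ℝ) 1, |h (x + l) - h x| ≤ 1 :=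
    fun x hx => hX₁ x (le_trans (le_max_left _ _) hx)
  -- modified function
  set hb : ℝ → ℝ := fun y => h (max y X₀) with hhb
  have hbm : Measurable hb := hm.comp (measurable_id.max measurable_const)
  have hbeq : ∀ y, X₀ ≤ y → hb y = h y := fun y hy => by
    simp [hhb, max_eq_left hy]
  -- uctb
  have uctb : ∀ ε : ℝ, 0 < ε → ∃ X, X₀ ≤ X ∧
      ∀ x, X ≤ x → ∀ l ∈ Icc (0:ℝ) 1, |hb (x + l) - hb x| ≤ ε := by
    intro ε hε
    obtain ⟨X, hX⟩ := uct_aux h hm hs ε hε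
    refine ⟨max X X₀, le_max_right _ _, fun x hx l hl => ?_⟩
    have hx0 : X₀ ≤ x := le_trans (le_max_right _ _) hx
    rw [hbeq _ hx0, hbeq _ (by linarith [hl.1])]
    exact hX x (le_trans (le_max_left _ _) hx) l hl
  -- growth bound
  have claim : ∀ n : ℕ, ∀ y, X₀ ≤ y → y ≤ X₀ + n → |h y - h X₀| ≤ n := by
    intro n
    induction n with
    | zero =>
      intro y h1 h2
      have : y = X₀ := le_antisymm (by simpa using h2) h1
      simp [this]
    | succ n ih =>
      intro y h1 h2
      by_cases hc : y ≤ X₀ + n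
      · calc |h y - h X₀| ≤ n := ih y h1 hc
          _ ≤ (n+1 : ℕ) := by exact_mod_cast Nat.le_succ n
      · push_neg at hc
        set z : ℝ := max X₀ (y - 1) with hz
        have hz1 : X₀ ≤ z := le_max_left _ _
        have hz2 : z ≤ X₀ + n := by
          apply max_le (by linarith)
          push_cast at h2 ⊢
          linarith
        have hl : y - z ∈ Icc (0:ℝ) 1 := by
          constructor
          · have : z ≤ y := max_le h1 (by linarith)
            linarith
          · have : y - 1 ≤ z := le_max_right _ _
            linarith
        have e1 : |h (z + (y - z)) - h z| ≤ 1 := hX₀u z hz1 _ hl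
        rw [show z + (y - z) = y by ring] at e1
        have e2 := ih z hz1 hz2
        calc |h y - h X₀| ≤ |h y - h z| + |h z - h X₀| := abs_sub_le _ _ _
          _ ≤ 1 + n := add_le_add e1 e2
          _ = ((n+1 : ℕ) : ℝ) := by push_cast; ring
  -- integrability of hb
  have hbint : ∀ a c : ℝ, IntervalIntegrable hb volume a c := by
    have key : ∀ a c : ℝ, a ≤ c → IntervalIntegrable hb volume a c := by
      intro a c hac
      rw [intervalIntegrable_iff]
      apply Measure.integrableOn_of_bounded (M := |h X₀| + (max c X₀ - X₀) + 1)
      · rw [uIoc_of_le hac, Real.volume_Ioc]; exact ENNReal.ofReal_ne_top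
      · exact hbm.aestronglyMeasurable
      · rw [ae_restrict_iff' measurableSet_uIoc]
        apply Eventually.of_forall
        intro y hy
        have hyc : y ≤ c := by
          rw [uIoc_of_le hac] at hy; exact hy.2
        set w : ℝ := max y X₀ with hw
        have hw1 : X₀ ≤ w := le_max_right _ _
        have hw2 : w ≤ max c X₀ := max_le_max hyc (le_refl _)
        have hn : w ≤ X₀ + (⌈max c X₀ - X₀⌉₊ : ℕ) := by
          have : max c X₀ - X₀ ≤ (⌈max c X₀ - X₀⌉₊ : ℕ) := Nat.le_ceil _
          linarith
        have hc2 := claim _ w hw1 hn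
        have hceil : ((⌈max c X₀ - X₀⌉₊ : ℕ) : ℝ) ≤ (max c X₀ - X₀) + 1 := by
          apply le_of_lt
          apply Nat.ceil_lt_add_one
          have : X₀ ≤ max c X₀ := le_max_right _ _
          linarith
        have : |hb y| ≤ |hb y - h X₀| + |h X₀| := by
          have := abs_sub_abs_le_abs_sub (hb y) (h X₀)
          have h3 := abs_add_le (hb y - h X₀) (h X₀)
          calc |hb y| = |hb y - h X₀ + h X₀| := by ring_nf
            _ ≤ |hb y - h X₀| + |h X₀| := abs_add_le _ _
        rw [Real.norm_eq_abs]
        calc |hb y| ≤ |hb y - h X₀| + |h X₀| := this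
          _ = |h w - h X₀| + |h X₀| := by rw [hhb]
          _ ≤ ((⌈max c X₀ - X₀⌉₊ : ℕ) : ℝ) + |h X₀| := by linarith [hc2]
          _ ≤ |h X₀| + (max c X₀ - X₀) + 1 := by linarith [hceil]
    intro a c
    rcases le_total a c with hac | hca
    · exact key a c hac
    · exact (key c a hca).symm
  -- smoothing
  set P : ℝ → ℝ := fun y => ∫ t in X₀..y, hb t with hP
  have Pc : Continuous P := intervalIntegral.continuous_primitive hbint X₀
  set Hf : ℝ → ℝ := fun y => ∫ t in y..(y+1), hb t with hHf
  have HfP : ∀ y, Hf y = P (y+1) - P y := by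
    intro y
    rw [hHf, hP]
    exact (intervalIntegral.integral_interval_sub_left (hbint _ _) (hbint _ _)).symm
  have Hfc : Continuous Hf := by
    have : Continuous fun y => P (y+1) - P y :=
      (Pc.comp (continuous_id.add continuous_const)).sub Pc
    exact (funext HfP : Hf = _) ▸ this
  have Hfint : ∀ a c : ℝ, IntervalIntegrable Hf volume a c :=
    fun a c => Hfc.intervalIntegrable a c
  set G : ℝ → ℝ := fun y => ∫ t in X₀..y, Hf t with hG
  have Gc : Continuous G := intervalIntegral.continuous_primitive Hfint X₀
  set H2 : ℝ → ℝ := fun y => ∫ t in y..(y+1), Hf t with hH2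
  have H2G : ∀ y, H2 y = G (y+1) - G y := by
    intro y
    rw [hH2, hG]
    exact (intervalIntegral.integral_interval_sub_left (Hfint _ _) (Hfint _ _)).symm
  have H2c : Continuous H2 := by
    have : Continuous fun y => G (y+1) - G y :=
      (Gc.comp (continuous_id.add continuous_const)).sub Gc
    exact (funext H2G : H2 = _) ▸ this
  set ψ : ℝ → ℝ := fun t => Hf (t+1) - Hf t with hψ
  have ψc : Continuous ψ := (Hfc.comp (continuous_id.add continuous_const)).sub Hfc
  -- key identity : H2 x - H2 X₀ = ∫ ψ
  have keyid : ∀ x : ℝ, H2 x - H2 X₀ = ∫ t in X₀..x, ψ t := by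
    intro x
    have e1 : ∫ t in X₀..x, Hf (t+1) = ∫ t in (X₀+1)..(x+1), Hf t :=
      intervalIntegral.integral_comp_add_right Hf 1
    have e2 : ∫ t in X₀..x, ψ t =
        (∫ t in X₀..x, Hf (t+1)) - ∫ t in X₀..x, Hf t := by
      rw [hψ]
      exact intervalIntegral.integral_sub
        ((Hfc.comp (continuous_id.add continuous_const)).intervalIntegrable _ _)
        (Hfint _ _)
    rw [e2, e1, H2G, H2G]
    have e3 : ∫ t in (X₀+1)..(x+1), Hf t = G (x+1) - G (X₀+1) :=
      (intervalIntegral.integral_interval_sub_left (Hfint _ _) (Hfint _ _)).symm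
    have e4 : ∫ t in X₀..x, Hf t = G x - G X₀ := by
      rw [hG]
      have := intervalIntegral.integral_interval_sub_left (Hfint X₀ x) (Hfint X₀ X₀)
      simp at this
      simp [this]
    rw [e3, e4]
    ring
  -- tail bound helper: |Hf t - Hf y| small for t ∈ [y, y+1], y beyond UCT threshold
  have Hfshift : ∀ y d : ℝ, Hf (y + d) = ∫ s in y..(y+1), hb (s + d) := by
    intro y d
    have h1 : Hf (y+d) = ∫ t in (y+d)..((y+d)+1), hb t := rfl
    rw [h1, intervalIntegral.integral_comp_add_right hb d,
      show (y+d)+1 = (y+1)+d by ring]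
  -- tb1
  have tb1 : Tendsto (fun y => hb y - Hf y) atTop (𝓝 0) := by
    rw [Metric.tendsto_atTop]
    intro ε hε
    obtain ⟨X, hXge, hX⟩ := uctb (ε/2) (by linarith)
    refine ⟨X, fun y hy => ?_⟩
    rw [Real.dist_eq, sub_zero]
    have e0 : hb y - Hf y = ∫ t in y..(y+1), (hb y - hb t) := by
      rw [intervalIntegral.integral_sub (intervalIntegrable_const) (hbint _ _),
        intervalIntegral.integral_const]
      simp
      rfl
    rw [e0]
    have hbound : ∀ t ∈ Set.uIoc y (y+1), ‖hb y - hb t‖ ≤ ε/2 := by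
      intro t ht
      rw [uIoc_of_le (by linarith)] at ht
      have hl : t - y ∈ Icc (0:ℝ) 1 := ⟨by linarith [ht.1], by linarith [ht.2]⟩
      have := hX y hy (t - y) hl
      rw [show y + (t - y) = t by ring] at this
      rw [Real.norm_eq_abs, abs_sub_comm]
      exact this
    calc |∫ t in y..(y+1), (hb y - hb t)| ≤ (ε/2) * |y + 1 - y| :=
        intervalIntegral.norm_integral_le_of_norm_le_const hbound
      _ = ε/2 := by simp
      _ < ε := by linarith
  -- Hf increments
  have Hfinc : ∀ ε : ℝ, 0 < ε → ∃ X, X₀ ≤ X ∧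
      ∀ x, X ≤ x → ∀ l ∈ Icc (0:ℝ) 1, |Hf (x + l) - Hf x| ≤ ε := by
    intro ε hε
    obtain ⟨X, hXge, hX⟩ := uctb ε hε
    refine ⟨X, hXge, fun x hx l hl => ?_⟩
    have hint2 : IntervalIntegrable (fun s => hb (s + l)) volume x (x+1) := by
      have := (hbint (x+l) ((x+1)+l)).comp_add_right l
      simpa using this
    have e1 : Hf (x + l) - Hf x = ∫ s in x..(x+1), (hb (s + l) - hb s) := by
      rw [Hfshift x l, hHf, ← intervalIntegral.integral_sub hint2 (hbint _ _)]
    rw [e1]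
    have hbound : ∀ s ∈ Set.uIoc x (x+1), ‖hb (s + l) - hb s‖ ≤ ε := by
      intro s hsi
      rw [uIoc_of_le (by linarith)] at hsi
      rw [Real.norm_eq_abs]
      exact hX s (by linarith [hsi.1]) l hl
    calc |∫ s in x..(x+1), (hb (s + l) - hb s)| ≤ ε * |x + 1 - x| :=
        intervalIntegral.norm_integral_le_of_norm_le_const hbound
      _ = ε := by simp
  -- tb2
  have tb2 : Tendsto (fun y => Hf y - H2 y) atTop (𝓝 0) := by
    rw [Metric.tendsto_atTop]
    intro ε hε
    obtain ⟨X, hXge, hX⟩ := Hfinc (ε/2) (by linarith)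
    refine ⟨X, fun y hy => ?_⟩
    rw [Real.dist_eq, sub_zero]
    have e0 : Hf y - H2 y = ∫ t in y..(y+1), (Hf y - Hf t) := by
      rw [intervalIntegral.integral_sub (intervalIntegrable_const) (Hfint _ _),
        intervalIntegral.integral_const]
      simp
      rfl
    rw [e0]
    have hbound : ∀ t ∈ Set.uIoc y (y+1), ‖Hf y - Hf t‖ ≤ ε/2 := by
      intro t ht
      rw [uIoc_of_le (by linarith)] at ht
      have hl : t - y ∈ Icc (0:ℝ) 1 := ⟨by linarith [ht.1], by linarith [ht.2]⟩
      have := hX y hy (t - y) hl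
      rw [show y + (t - y) = t by ring] at this
      rw [Real.norm_eq_abs, abs_sub_comm]
      exact this
    calc |∫ t in y..(y+1), (Hf y - Hf t)| ≤ (ε/2) * |y + 1 - y| :=
        intervalIntegral.norm_integral_le_of_norm_le_const hbound
      _ = ε/2 := by simp
      _ < ε := by linarith
  -- tb3
  have tb3 : Tendsto ψ atTop (𝓝 0) := by
    rw [Metric.tendsto_atTop]
    intro ε hε
    obtain ⟨X, hXge, hX⟩ := Hfinc (ε/2) (by linarith)
    refine ⟨X, fun t ht => ?_⟩
    rw [Real.dist_eq, sub_zero, hψ]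
    have := hX t ht 1 ⟨zero_le_one, le_refl 1⟩
    calc |Hf (t+1) - Hf t| ≤ ε/2 := this
      _ < ε := by linarith
  -- assembly
  set b : ℝ := Real.exp X₀ with hbdef
  have hbpos : 0 < b := Real.exp_pos _
  have hbA : A ≤ b := by
    calc A = Real.exp (Real.log A) := (Real.exp_log hA).symm
      _ ≤ b := Real.exp_le_exp.mpr hX₀A
  have hlogb : Real.log b = X₀ := Real.log_exp X₀
  have hloguX : ∀ u, b ≤ u → X₀ ≤ Real.log u := by
    intro u hu
    have := Real.log_le_log hbpos hu
    rwa [hlogb] at this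
  refine ⟨b, hbA, ?_⟩
  set Mf : ℝ → ℝ := fun u => if X₀ ≤ Real.log u then
      Real.exp (hb (Real.log u) - H2 (Real.log u) + H2 X₀)
    else Real.exp (H2 X₀) with hMf
  have hMm : Measurable Mf := by
    apply Measurable.ite
    · exact measurableSet_le measurable_const Real.measurable_log
    · exact Real.measurable_exp.comp (((hbm.comp Real.measurable_log).sub
        (H2c.measurable.comp Real.measurable_log)).add_const _)
    · exact measurable_const
  refine ⟨Mf, hMm, Real.exp (H2 X₀), Real.exp_pos _, ?_, ?_⟩
  · have hm0 : Tendsto (fun y => hb y - H2 y) atTop (𝓝 0) := by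
      have := tb1.add tb2
      simp only [add_zero] at this
      apply this.congr
      intro y; ring
    have h1 : Tendsto (fun u => hb (Real.log u) - H2 (Real.log u)) atTop (𝓝 0) :=
      hm0.comp Real.tendsto_log_atTop
    have h2 : Tendsto (fun u => Real.exp (hb (Real.log u) - H2 (Real.log u) + H2 X₀))
        atTop (𝓝 (Real.exp (0 + H2 X₀))) :=
      (Real.continuous_exp.continuousAt.tendsto).comp (h1.add_const _)
    rw [zero_add] at h2
    apply h2.congr'
    filter_upwards [eventually_ge_atTop b] with u hu
    rw [hMf]
    simp only [hloguX u hu, if_pos]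
  · refine ⟨fun u => ψ (Real.log u), ?_, tb3.comp Real.tendsto_log_atTop, ?_⟩
    · apply ψc.comp_continuousOn
      apply Real.continuousOn_log.mono
      intro x hx
      simp only [mem_compl_iff, mem_singleton_iff]
      exact ne_of_gt (lt_of_lt_of_le hbpos hx)
    · intro u hu
      have hu0 : 0 < u := lt_of_lt_of_le hbpos hu
      have hlogu : X₀ ≤ Real.log u := hloguX u hu
      have hpos : ∀ x ∈ uIcc b u, 0 < x := by
        intro x hx
        rw [uIcc_of_le hu] at hx
        exact lt_of_lt_of_le hbpos hx.1
      have hder : ∀ x ∈ uIcc b u, HasDerivAt Real.log x⁻¹ x :=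
        fun x hx => Real.hasDerivAt_log (ne_of_gt (hpos x hx))
      have hcont' : ContinuousOn (fun s : ℝ => s⁻¹) (uIcc b u) :=
        ContinuousOn.inv₀ continuousOn_id (fun x hx => ne_of_gt (hpos x hx))
      have hchg : (∫ t in b..u, ψ (Real.log t) / t) = ∫ x in X₀..(Real.log u), ψ x := by
        have e1 : (∫ t in b..u, ψ (Real.log t) / t) =
            ∫ t in b..u, t⁻¹ • (ψ ∘ Real.log) t := by
          apply intervalIntegral.integral_congr
          intro t ht
          simp only [Function.comp, smul_eq_mul]
          rw [div_eq_inv_mul]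
        rw [e1, intervalIntegral.integral_comp_smul_deriv hder hcont' ψc, hlogb]
      rw [hchg, ← keyid (Real.log u)]
      have hMfu : Mf u = Real.exp (hb (Real.log u) - H2 (Real.log u) + H2 X₀) := by
        rw [hMf]
        simp only [hlogu, if_pos]
      rw [hMfu, ← Real.exp_add,
        show hb (Real.log u) - H2 (Real.log u) + H2 X₀ + (H2 (Real.log u) - H2 X₀)
          = hb (Real.log u) by ring,
        hbeq _ hlogu]
      rw [hh]
      simp only
      rw [Real.exp_log hu0, Real.exp_log (hLpos u (le_trans hbA hu))]

/-- `f` is regularly varying at infinity of index `ρ`: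
`f(ξu)/f(u) → ξ^ρ` as `u → ∞`, for every `ξ > 0`. -/
def IsRV (f : ℝ → ℝ) (ρ : ℝ) : Prop :=
  ∀ ξ : ℝ, 0 < ξ → Tendsto (fun u => f (ξ * u) / f u) atTop (𝓝 (ξ ^ ρ))

/-- Representation theorem: a measurable function `L : [A,∞) → (0,∞)` is slowly
varying at infinity iff `L(u) = M(u) * exp (∫_b^u φ(t)/t dt)` on `[b,∞)` for some
`b ≥ A`, where `M` is measurable with positive finite limit at infinity and `φ` is
continuous with `φ(u) → 0` at infinity. -/
theorem representation_theorem (A : ℝ) (hA : 0 < A) (L : ℝ → ℝ)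
    (hLmeas : Measurable L) (hLpos : ∀ u, A ≤ u → 0 < L u) :
    IsRV L 0 ↔
      ∃ b : ℝ, A ≤ b ∧
        ∃ M : ℝ → ℝ, Measurable M ∧
          ∃ Mstar : ℝ, 0 < Mstar ∧ Tendsto M atTop (𝓝 Mstar) ∧
            ∃ φ : ℝ → ℝ, ContinuousOn φ (Ici b) ∧ Tendsto φ atTop (𝓝 0) ∧
              ∀ u, b ≤ u → L u = M u * Real.exp (∫ t in b..u, φ t / t) := by
  constructor
  · intro hrv
    exact fwd_aux A hA L hLmeas hLpos hrv
  · rintro ⟨b, hb, M, hMm, Mstar, hM0, hM, φ, hφc, hφ0, hrep⟩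
    exact rev_aux A hA L hLpos b hb M Mstar hM0 hM φ hφc hφ0 hrep
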